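/- With the lifting setup below, for each k with 1 ≤ k ≤ c, the family of maps t_{k,n} = t̃_{k,n} ⊗_Q R : C_n → C_{n−2} commutes with the differentials of C: for every n, d_{n−2}∘t_{k,n} = t_{k,n−1}∘d_n as maps C_n → C_{n−3}. In other words, each Eisenbud operator t_k is a chain map from C to its second shift. -/

import Mathlib

/-!
Statement 2: the Eisenbud operators `t_k = t̃_k ⊗_Q R` of a complex `C` over
`R = Q/(f₁,…,f_c)` commute with the differentials of `C`, i.e. each `t_k` is a chain
map from `C` to its second shift.

A complex of `R`-modules with a lift is encoded by a family `Ct : ℤ → Type` of finitely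
generated free `Q`-modules, `Q`-linear maps `dt n : Ct (n+1) → Ct n` and
`tt k n : Ct (n+1+1) → Ct n` with `d̃ ∘ d̃ = Σ f_k • t̃_k`; the complex `C` itself has
modules `R ⊗[Q] Ct n` and differentials `(dt n).baseChange R`, and the Eisenbud
operators are `(tt k n).baseChange R`.
-/

open TensorProduct

section Helpers

variable {Q : Type} [CommRing Q]

lemma image_lt_last {c : ℕ} (f : Fin (c+1) → Q) :
    f '' {i | i < Fin.last c} = Set.range (fun i : Fin c => f i.castSucc) := by
  ext x
  constructor
  · rintro ⟨i, hi, rfl⟩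
    obtain ⟨i', rfl⟩ := Fin.exists_castSucc_eq.mpr (Fin.ne_of_lt hi)
    exact ⟨i', rfl⟩
  · rintro ⟨i, rfl⟩
    exact ⟨i.castSucc, Fin.castSucc_lt_last i, rfl⟩

lemma image_lt_castSucc {c : ℕ} (f : Fin (c+1) → Q) (j : Fin c) :
    f '' {i | i < j.castSucc} = (fun i : Fin c => f i.castSucc) '' {i | i < j} := by
  ext x
  constructor
  · rintro ⟨i, hi, rfl⟩
    have hlt : i < Fin.last c := lt_of_lt_of_le hi (Fin.le_last _)
    obtain ⟨i', rfl⟩ := Fin.exists_castSucc_eq.mpr (Fin.ne_of_lt hlt)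
    exact ⟨i', Fin.castSucc_lt_castSucc_iff.mp hi, rfl⟩
  · rintro ⟨i, hi, rfl⟩
    exact ⟨i.castSucc, Fin.castSucc_lt_castSucc_iff.mpr hi, rfl⟩

/-- Quasi-regularity in degree one: a relation among a (weakly) regular sequence
has all coefficients in the ideal generated by the sequence. -/
lemma relation_mem_span :
    ∀ (c : ℕ) (f : Fin c → Q),
      (∀ (j : Fin c) (x : Q), f j * x ∈ Ideal.span (f '' {i | i < j}) →
          x ∈ Ideal.span (f '' {i | i < j})) →
      ∀ a : Fin c → Q, (∑ i, f i * a i = 0) → ∀ i, a i ∈ Ideal.span (Set.range f) := by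
  intro c
  induction c with
  | zero => exact fun f _ a _ i => i.elim0
  | succ c ih =>
    intro f H a ha
    set f' : Fin c → Q := fun i => f i.castSucc with hf'
    rw [Fin.sum_univ_castSucc] at ha
    have hlast : a (Fin.last c) ∈ Ideal.span (Set.range f') := by
      rw [← image_lt_last f]
      apply H (Fin.last c)
      have heq : f (Fin.last c) * a (Fin.last c) = -∑ i : Fin c, f i.castSucc * a i.castSucc :=
        eq_neg_of_add_eq_zero_right ha
      rw [heq]
      refine neg_mem (Ideal.sum_mem _ fun i _ => ?_)
      exact Ideal.mul_mem_right _ _ (Ideal.subset_span ⟨i.castSucc, Fin.castSucc_lt_last i, rfl⟩)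
    obtain ⟨y, hy⟩ := (Submodule.mem_span_range_iff_exists_fun Q).mp hlast
    have hrel : ∑ i : Fin c, f' i * (a i.castSucc + f (Fin.last c) * y i) = 0 := by
      have hexp : ∑ i : Fin c, f' i * (a i.castSucc + f (Fin.last c) * y i)
          = (∑ i : Fin c, f i.castSucc * a i.castSucc)
            + f (Fin.last c) * ∑ i : Fin c, y i • f' i := by
        rw [Finset.mul_sum, ← Finset.sum_add_distrib]
        exact Finset.sum_congr rfl fun i _ => by simp only [smul_eq_mul, hf']; ring
      rw [hexp, hy, ha]
    have H' : ∀ (j : Fin c) (x : Q), f' j * x ∈ Ideal.span (f' '' {i | i < j}) →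
        x ∈ Ideal.span (f' '' {i | i < j}) := by
      intro j x hx
      have himg := image_lt_castSucc f j
      rw [← himg] at hx ⊢
      exact H j.castSucc x hx
    have hsub : Ideal.span (Set.range f') ≤ Ideal.span (Set.range f) :=
      Ideal.span_mono (by rintro _ ⟨i, rfl⟩; exact ⟨i.castSucc, rfl⟩)
    intro i
    refine Fin.lastCases ?_ ?_ i
    · exact hsub hlast
    · intro i'
      have h1 := hsub (ih f' H' _ hrel i')
      have h2 : f (Fin.last c) * y i' ∈ Ideal.span (Set.range f) :=
        Ideal.mul_mem_right _ _ (Ideal.subset_span ⟨Fin.last c, rfl⟩)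
      have h3 : a i'.castSucc
          = (a i'.castSucc + f (Fin.last c) * y i') - f (Fin.last c) * y i' := by ring
      rw [h3]; exact sub_mem h1 h2

lemma regular_H {c : ℕ} {f : Fin c → Q}
    (hreg : RingTheory.Sequence.IsRegular Q (List.ofFn f)) :
    ∀ (j : Fin c) (x : Q), f j * x ∈ Ideal.span (f '' {i | i < j}) →
      x ∈ Ideal.span (f '' {i | i < j}) := by
  intro j x hx
  have hjlen : (j : ℕ) < (List.ofFn f).length := by simp [j.isLt]
  have hr := hreg.toIsWeaklyRegular.regular_mod_prev j hjlen
  have hID : (Ideal.ofList ((List.ofFn f).take j) • ⊤ : Submodule Q Q)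
      = Ideal.span (f '' {i | i < j}) := by
    rw [smul_eq_mul, Ideal.mul_top]
    have htake : (List.ofFn f).take (j : ℕ)
        = List.ofFn (Fin.take (j : ℕ) j.isLt.le f) :=
      (Fin.ofFn_take_eq_take_ofFn j.isLt.le f).symm
    have hset : { r | r ∈ (List.ofFn f).take (j : ℕ) } = f '' {i | i < j} := by
      rw [htake]
      ext x
      simp only [Set.mem_setOf_eq, List.mem_ofFn, Fin.take, Set.mem_image]
      constructor
      · rintro ⟨i, rfl⟩
        exact ⟨Fin.castLE j.isLt.le i, by simpa [Fin.lt_def] using i.isLt, rfl⟩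
      · rintro ⟨i, hi, rfl⟩
        exact ⟨⟨(i : ℕ), hi⟩, rfl⟩
    rw [Ideal.ofList, hset]
  rw [← hID] at hx ⊢
  have hget : (List.ofFn f)[(j : ℕ)]'hjlen = f j := by simp
  rw [hget] at hr
  have h0 : f j • (Submodule.Quotient.mk x :
      Q ⧸ (Ideal.ofList ((List.ofFn f).take j) • ⊤ : Submodule Q Q)) = f j • 0 := by
    rw [smul_zero, ← Submodule.Quotient.mk_smul, smul_eq_mul, Submodule.Quotient.mk_eq_zero]
    exact hx
  have := hr h0
  rwa [Submodule.Quotient.mk_eq_zero] at this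

lemma one_tmul_eq_zero {I : Ideal Q} {M : Type} [AddCommGroup M] [Module Q M]
    {m : M} (hm : m ∈ I • (⊤ : Submodule Q M)) :
    (1 : Q ⧸ I) ⊗ₜ[Q] m = (0 : (Q ⧸ I) ⊗[Q] M) := by
  refine Submodule.smul_induction_on hm ?_ ?_
  · intro a ha x _
    have h1 : (1 : Q ⧸ I) ⊗ₜ[Q] (a • x) = (a • (1 : Q ⧸ I)) ⊗ₜ[Q] x :=
      (TensorProduct.smul_tmul a (1 : Q ⧸ I) x).symm
    have h2 : a • (1 : Q ⧸ I) = 0 := by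
      rw [← Algebra.algebraMap_eq_smul_one, Ideal.Quotient.algebraMap_eq,
        Ideal.Quotient.eq_zero_iff_mem]
      exact ha
    rw [h1, h2, TensorProduct.zero_tmul]
  · intro x y hx hy
    rw [TensorProduct.tmul_add, hx, hy, add_zero]

end Helpers

/-- The quotient ring `R = Q/(f₁,…,f_c)`. -/
abbrev Rquot (Q : Type) [CommRing Q] {c : ℕ} (f : Fin c → Q) : Type :=
  Q ⧸ Ideal.span (Set.range f)

/-- Eisenbud: each Eisenbud operator `t_k` commutes with the
differentials of `C`, i.e. is a chain map `C → Σ²C`. -/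
theorem eisenbud_operator_is_chain_map
    (Q : Type) [CommRing Q] (c : ℕ) (f : Fin c → Q)
    (hreg : RingTheory.Sequence.IsRegular Q (List.ofFn f))
    (Ct : ℤ → Type) [∀ n, AddCommGroup (Ct n)] [∀ n, Module Q (Ct n)]
    (hfree : ∀ n, Module.Free Q (Ct n)) (hfin : ∀ n, Module.Finite Q (Ct n))
    (dt : ∀ n : ℤ, Ct (n + 1) →ₗ[Q] Ct n)
    (tt : Fin c → ∀ n : ℤ, Ct (n + 1 + 1) →ₗ[Q] Ct n)
    (hdd : ∀ (n : ℤ) (x : Ct (n + 1 + 1)),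
      dt n (dt (n + 1) x) = ∑ k, f k • tt k n x) :
    ∀ (k : Fin c) (n : ℤ) (x : Rquot Q f ⊗[Q] Ct (n + 1 + 1 + 1)),
      (dt n).baseChange (Rquot Q f) ((tt k (n + 1)).baseChange (Rquot Q f) x) =
        (tt k n).baseChange (Rquot Q f) ((dt (n + 1 + 1)).baseChange (Rquot Q f) x) := by
  intro k n x
  haveI := hfree n
  haveI := hfin n
  have hmem : ∀ (x0 : Ct (n+1+1+1)) (k : Fin c),
      (fun k : Fin c => dt n (tt k (n+1) x0) - tt k n (dt (n+1+1) x0)) k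
        ∈ Ideal.span (Set.range f) • (⊤ : Submodule Q (Ct n)) := by
    intro x0 k
    set m : Fin c → Ct n := fun k => dt n (tt k (n+1) x0) - tt k n (dt (n+1+1) x0) with hm
    have hsum : ∑ k, f k • m k = 0 := by
      have h1 : dt n (dt (n+1) (dt (n+1+1) x0)) = ∑ k, f k • dt n (tt k (n+1) x0) := by
        rw [hdd (n+1) x0, map_sum]
        exact Finset.sum_congr rfl fun k _ => (dt n).map_smul (f k) _
      have h2 : dt n (dt (n+1) (dt (n+1+1) x0)) = ∑ k, f k • tt k n (dt (n+1+1) x0) :=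
        hdd n (dt (n+1+1) x0)
      calc ∑ k, f k • m k
          = (∑ k, f k • dt n (tt k (n+1) x0)) - ∑ k, f k • tt k n (dt (n+1+1) x0) := by
            rw [← Finset.sum_sub_distrib]
            exact Finset.sum_congr rfl fun k _ => smul_sub _ _ _
        _ = 0 := by rw [← h1, ← h2, sub_self]
    set b := Module.Free.chooseBasis Q (Ct n) with hb
    have hcoef : ∀ j, ∀ k, b.repr (m k) j ∈ Ideal.span (Set.range f) := by
      intro j
      refine relation_mem_span c f (regular_H hreg) (fun k => b.repr (m k) j) ?_ 
      have h3 := congrArg (fun z => b.repr z j) hsum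
      simpa [map_sum, Finsupp.smul_apply, smul_eq_mul] using h3
    have hrepr := b.sum_repr (m k)
    rw [← hrepr]
    exact Submodule.sum_mem _ fun j _ => Submodule.smul_mem_smul (hcoef j k) trivial
  induction x using TensorProduct.induction_on with
  | zero => simp
  | tmul r x0 =>
    simp only [LinearMap.baseChange_tmul]
    have h0 : (1 : Rquot Q f) ⊗ₜ[Q] (dt n (tt k (n+1) x0) - tt k n (dt (n+1+1) x0))
        = (0 : Rquot Q f ⊗[Q] Ct n) := one_tmul_eq_zero (hmem x0 k)
    rw [TensorProduct.tmul_sub, sub_eq_zero] at h0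
    calc r ⊗ₜ[Q] (dt n (tt k (n+1) x0))
        = r • ((1 : Rquot Q f) ⊗ₜ[Q] (dt n (tt k (n+1) x0))) := by
          rw [TensorProduct.smul_tmul', smul_eq_mul, mul_one]
      _ = r • ((1 : Rquot Q f) ⊗ₜ[Q] (tt k n (dt (n+1+1) x0))) := by rw [h0]
      _ = r ⊗ₜ[Q] (tt k n (dt (n+1+1) x0)) := by
          rw [TensorProduct.smul_tmul', smul_eq_mul, mul_one]
  | add u v hu hv => simp only [map_add, hu, hv]
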